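/- For any m×n real matrix A with ‖A‖_∞ ≤ 1, there exist a sequence of partitions {𝒫_j}_{j≥1} of {1,…,m} and a sequence of partitions {𝒬_j}_{j≥1} of {1,…,n} such that for each j: (1) 𝒫_{j+1} refines 𝒫_j and 𝒬_{j+1} refines 𝒬_j; (2) |𝒫_j| and |𝒬_j| are at most (2^{j+2} j)^{j²}; and (3) ‖A − A^{𝒫_j,𝒬_j}‖_□ ≤ 2j⁻¹ + 6j³·2⁻ʲ. -/

import Mathlib

open Filter MeasureTheory
open scoped Topology

/-- The ℓ∞ norm of a matrix: the maximum absolute value of its entries. -/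
noncomputable def linfNorm {m n : ℕ} (A : Matrix (Fin m) (Fin n) ℝ) : ℝ :=
  ⨆ i, ⨆ j, |A i j|

/-- The averaged Frobenius norm ‖A‖_F̄ = √( (1/(mn)) ∑ aᵢⱼ² ). -/
noncomputable def avgFrobNorm {m n : ℕ} (A : Matrix (Fin m) (Fin n) ℝ) : ℝ :=
  Real.sqrt ((∑ i, ∑ j, (A i j) ^ 2) / (m * n))

/-- The (normalized) cut norm ‖A‖_□ = (1/(mn)) max{ |xᵀAy| : ‖x‖_∞ ≤ 1, ‖y‖_∞ ≤ 1 }. -/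
noncomputable def cutNorm {m n : ℕ} (A : Matrix (Fin m) (Fin n) ℝ) : ℝ :=
  sSup {r : ℝ | ∃ (x : Fin m → ℝ) (y : Fin n → ℝ),
    (∀ i, |x i| ≤ 1) ∧ (∀ j, |y j| ≤ 1) ∧
    r = |∑ i, ∑ j, x i * A i j * y j| / (m * n)}

open scoped Classical in
/-- The block-averaged matrix A^{𝒫,𝒬}: each entry is replaced by the average of A over
the block (equivalence class of rows × equivalence class of columns) containing it, where
the partitions 𝒫, 𝒬 are encoded as setoids (equivalence relations). -/
noncomputable def blockAvg {m n : ℕ} (A : Matrix (Fin m) (Fin n) ℝ)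
    (P : Setoid (Fin m)) (Q : Setoid (Fin n)) : Matrix (Fin m) (Fin n) ℝ :=
  fun i j =>
    (∑ i' ∈ Finset.univ.filter (fun i' => P.r i i'),
      ∑ j' ∈ Finset.univ.filter (fun j' => Q.r j j'), A i' j') /
    (((Finset.univ.filter (fun i' => P.r i i')).card : ℝ) *
      ((Finset.univ.filter (fun j' => Q.r j j')).card : ℝ))

namespace Stmt10Aux

variable {m n : ℕ}

open scoped Classical in
noncomputable def cls {m : ℕ} (P : Setoid (Fin m)) (i : Fin m) : Finset (Fin m) :=
  Finset.univ.filter (fun i' => P.r i i')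

lemma mem_cls {P : Setoid (Fin m)} {i i' : Fin m} : i' ∈ cls P i ↔ P.r i i' := by
  simp [cls]

lemma self_mem_cls {P : Setoid (Fin m)} {i : Fin m} : i ∈ cls P i := mem_cls.2 (P.refl i)

lemma card_cls_pos (P : Setoid (Fin m)) (i : Fin m) : 0 < (cls P i).card :=
  Finset.card_pos.2 ⟨i, self_mem_cls⟩

lemma cls_eq_of_rel {P : Setoid (Fin m)} {i i' : Fin m} (h : P.r i i') :
    cls P i = cls P i' := by
  ext a
  simp only [mem_cls]
  exact ⟨fun h' => P.trans (P.symm h) h', fun h' => P.trans h h'⟩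

lemma blockAvg_eq (A : Matrix (Fin m) (Fin n) ℝ) (P : Setoid (Fin m)) (Q : Setoid (Fin n))
    (i : Fin m) (j : Fin n) :
    blockAvg A P Q i j =
      (∑ i' ∈ cls P i, ∑ j' ∈ cls Q j, A i' j') /
        (((cls P i).card : ℝ) * ((cls Q j).card : ℝ)) := by
  simp [blockAvg, cls]

lemma abs_blockAvg_le {A : Matrix (Fin m) (Fin n) ℝ} (hA : ∀ i j, |A i j| ≤ 1)
    (P : Setoid (Fin m)) (Q : Setoid (Fin n)) (i : Fin m) (j : Fin n) :
    |blockAvg A P Q i j| ≤ 1 := by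
  have h1 := card_cls_pos P i
  have h2 := card_cls_pos Q j
  have hc : (0:ℝ) < ((cls P i).card : ℝ) * ((cls Q j).card : ℝ) := by
    have : (0:ℝ) < ((cls P i).card : ℝ) := by exact_mod_cast h1
    have : (0:ℝ) < ((cls Q j).card : ℝ) := by exact_mod_cast h2
    positivity
  rw [blockAvg_eq, abs_div, abs_of_pos hc, div_le_one hc]
  calc |∑ i' ∈ cls P i, ∑ j' ∈ cls Q j, A i' j'|
      ≤ ∑ i' ∈ cls P i, |∑ j' ∈ cls Q j, A i' j'| := Finset.abs_sum_le_sum_abs _ _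
    _ ≤ ∑ i' ∈ cls P i, ∑ j' ∈ cls Q j, |A i' j'| :=
        Finset.sum_le_sum fun i' _ => Finset.abs_sum_le_sum_abs _ _
    _ ≤ ∑ _i' ∈ cls P i, ∑ _j' ∈ cls Q j, (1:ℝ) :=
        Finset.sum_le_sum fun i' _ => Finset.sum_le_sum fun j' _ => hA i' j'
    _ = ((cls P i).card : ℝ) * ((cls Q j).card : ℝ) := by
        simp [Finset.sum_const, mul_comm]

lemma sum_cls (P : Setoid (Fin m)) (g : Fin m → ℝ) :
    ∑ i, ∑ i' ∈ cls P i, g i' = ∑ i', ((cls P i').card : ℝ) * g i' := by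
  classical
  calc ∑ i, ∑ i' ∈ cls P i, g i'
      = ∑ i, ∑ i', if P.r i i' then g i' else 0 := by
        refine Finset.sum_congr rfl fun i _ => ?_
        rw [cls, Finset.sum_filter]
    _ = ∑ i', ∑ i, if P.r i i' then g i' else 0 := Finset.sum_comm
    _ = ∑ i', ((cls P i').card : ℝ) * g i' := by
        refine Finset.sum_congr rfl fun i' _ => ?_
        rw [← Finset.sum_filter]
        have he : Finset.univ.filter (fun i => P.r i i') = cls P i' := by
          ext a
          simp only [Finset.mem_filter, Finset.mem_univ, true_and, mem_cls]
          exact ⟨fun h => P.symm h, fun h => P.symm h⟩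
        rw [he, Finset.sum_const, nsmul_eq_mul]

lemma sum_mul_blockAvg (M : Matrix (Fin m) (Fin n) ℝ) (P : Setoid (Fin m)) (Q : Setoid (Fin n))
    (w : Matrix (Fin m) (Fin n) ℝ)
    (hw : ∀ i i' j j', P.r i i' → Q.r j j' → w i j = w i' j') :
    ∑ i, ∑ j, w i j * blockAvg M P Q i j = ∑ i, ∑ j, w i j * M i j := by
  have key : ∀ (i : Fin m) (j : Fin n), w i j * blockAvg M P Q i j =
      ∑ i' ∈ cls P i, ∑ j' ∈ cls Q j,
        w i' j' * M i' j' / (((cls P i').card : ℝ) * ((cls Q j').card : ℝ)) := by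
    intro i j
    calc w i j * blockAvg M P Q i j
        = ∑ i' ∈ cls P i, ∑ j' ∈ cls Q j,
            w i j * M i' j' / (((cls P i).card : ℝ) * ((cls Q j).card : ℝ)) := by
          rw [blockAvg_eq, mul_div_assoc', Finset.mul_sum, Finset.sum_div]
          exact Finset.sum_congr rfl fun i' _ => by rw [Finset.mul_sum, Finset.sum_div]
      _ = ∑ i' ∈ cls P i, ∑ j' ∈ cls Q j,
            w i' j' * M i' j' / (((cls P i').card : ℝ) * ((cls Q j').card : ℝ)) := by
          refine Finset.sum_congr rfl fun i' hi' => Finset.sum_congr rfl fun j' hj' => ?_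
          rw [hw i i' j j' (mem_cls.1 hi') (mem_cls.1 hj'),
            cls_eq_of_rel (mem_cls.1 hi'), cls_eq_of_rel (mem_cls.1 hj')]
  calc ∑ i, ∑ j, w i j * blockAvg M P Q i j
      = ∑ i, ∑ j, ∑ i' ∈ cls P i, ∑ j' ∈ cls Q j,
          w i' j' * M i' j' / (((cls P i').card : ℝ) * ((cls Q j').card : ℝ)) := by
        exact Finset.sum_congr rfl fun i _ => Finset.sum_congr rfl fun j _ => key i j
    _ = ∑ i, ∑ i' ∈ cls P i, ∑ j, ∑ j' ∈ cls Q j,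
          w i' j' * M i' j' / (((cls P i').card : ℝ) * ((cls Q j').card : ℝ)) :=
        Finset.sum_congr rfl fun i _ => Finset.sum_comm
    _ = ∑ i', ((cls P i').card : ℝ) * ∑ j, ∑ j' ∈ cls Q j,
          w i' j' * M i' j' / (((cls P i').card : ℝ) * ((cls Q j').card : ℝ)) :=
        sum_cls P _
    _ = ∑ i', ((cls P i').card : ℝ) * ∑ j', ((cls Q j').card : ℝ) *
          (w i' j' * M i' j' / (((cls P i').card : ℝ) * ((cls Q j').card : ℝ))) := by
        refine Finset.sum_congr rfl fun i' _ => ?_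
        rw [sum_cls Q]
    _ = ∑ i', ∑ j', w i' j' * M i' j' := by
        refine Finset.sum_congr rfl fun i' _ => ?_
        rw [Finset.mul_sum]
        refine Finset.sum_congr rfl fun j' _ => ?_
        have h1 : ((cls P i').card : ℝ) ≠ 0 := by
          exact_mod_cast (card_cls_pos P i').ne'
        have h2 : ((cls Q j').card : ℝ) ≠ 0 := by
          exact_mod_cast (card_cls_pos Q j').ne'
        field_simp

end Stmt10Aux
namespace Stmt10Aux

variable {m n : ℕ}

noncomputable def En (A : Matrix (Fin m) (Fin n) ℝ) (P : Setoid (Fin m)) (Q : Setoid (Fin n)) : ℝ :=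
  ∑ i, ∑ j, (blockAvg A P Q i j) ^ 2

lemma En_nonneg (A : Matrix (Fin m) (Fin n) ℝ) (P : Setoid (Fin m)) (Q : Setoid (Fin n)) :
    0 ≤ En A P Q := by
  apply Finset.sum_nonneg
  intro i _
  apply Finset.sum_nonneg
  intro j _
  positivity

lemma En_le {A : Matrix (Fin m) (Fin n) ℝ} (hA : ∀ i j, |A i j| ≤ 1)
    (P : Setoid (Fin m)) (Q : Setoid (Fin n)) : En A P Q ≤ (m : ℝ) * n := by
  calc En A P Q ≤ ∑ _i : Fin m, ∑ _j : Fin n, (1:ℝ) := by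
        refine Finset.sum_le_sum fun i _ => Finset.sum_le_sum fun j _ => ?_
        have := abs_blockAvg_le hA P Q i j
        nlinarith [abs_nonneg (blockAvg A P Q i j), sq_abs (blockAvg A P Q i j)]
    _ = (m : ℝ) * n := by simp [Finset.sum_const]

lemma blockAvg_congr (M : Matrix (Fin m) (Fin n) ℝ) (P : Setoid (Fin m)) (Q : Setoid (Fin n))
    {i i' : Fin m} {j j' : Fin n} (h1 : P.r i i') (h2 : Q.r j j') :
    blockAvg M P Q i j = blockAvg M P Q i' j' := by
  rw [blockAvg_eq, blockAvg_eq, cls_eq_of_rel h1, cls_eq_of_rel h2]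

lemma sum_bAvg_mul_self (A : Matrix (Fin m) (Fin n) ℝ) (P : Setoid (Fin m)) (Q : Setoid (Fin n)) :
    ∑ i, ∑ j, blockAvg A P Q i j * blockAvg A P Q i j
      = ∑ i, ∑ j, blockAvg A P Q i j * A i j :=
  sum_mul_blockAvg A P Q _ (fun i i' j j' h1 h2 => blockAvg_congr A P Q h1 h2)

lemma sum_cross (A : Matrix (Fin m) (Fin n) ℝ) (P P' : Setoid (Fin m)) (Q Q' : Setoid (Fin n))
    (hP : ∀ a b, P'.r a b → P.r a b) (hQ : ∀ a b, Q'.r a b → Q.r a b) :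
    ∑ i, ∑ j, blockAvg A P Q i j * blockAvg A P' Q' i j
      = ∑ i, ∑ j, blockAvg A P Q i j * A i j :=
  sum_mul_blockAvg A P' Q' _ (fun i i' j j' h1 h2 =>
    blockAvg_congr A P Q (hP _ _ h1) (hQ _ _ h2))

lemma En_refine (A : Matrix (Fin m) (Fin n) ℝ) (P P' : Setoid (Fin m)) (Q Q' : Setoid (Fin n))
    (hP : ∀ a b, P'.r a b → P.r a b) (hQ : ∀ a b, Q'.r a b → Q.r a b) :
    En A P' Q' = En A P Q +
      ∑ i, ∑ j, (blockAvg A P' Q' i j - blockAvg A P Q i j) ^ 2 := by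
  set B := blockAvg A P Q with hB
  set C := blockAvg A P' Q' with hC
  have h1 : ∑ i, ∑ j, B i j * B i j = ∑ i, ∑ j, B i j * A i j := sum_bAvg_mul_self A P Q
  have h2 : ∑ i, ∑ j, C i j * C i j = ∑ i, ∑ j, C i j * A i j := sum_bAvg_mul_self A P' Q'
  have h3 : ∑ i, ∑ j, B i j * C i j = ∑ i, ∑ j, B i j * A i j := sum_cross A P P' Q Q' hP hQ
  have expand : ∑ i, ∑ j, (C i j - B i j) ^ 2
      = (∑ i, ∑ j, C i j * C i j) - 2 * (∑ i, ∑ j, B i j * C i j)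
        + ∑ i, ∑ j, B i j * B i j := by
    rw [Finset.mul_sum, ← Finset.sum_sub_distrib, ← Finset.sum_add_distrib]
    refine Finset.sum_congr rfl fun i _ => ?_
    rw [Finset.mul_sum, ← Finset.sum_sub_distrib, ← Finset.sum_add_distrib]
    exact Finset.sum_congr rfl fun j _ => by ring
  have eEn : En A P Q = ∑ i, ∑ j, B i j * B i j := by
    unfold En
    exact Finset.sum_congr rfl fun i _ => Finset.sum_congr rfl fun j _ => sq (B i j)
  have eEn' : En A P' Q' = ∑ i, ∑ j, C i j * C i j := by
    unfold En
    exact Finset.sum_congr rfl fun i _ => Finset.sum_congr rfl fun j _ => sq (C i j)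
  rw [eEn, eEn', expand]
  linarith

def refineBy (P : Setoid (Fin m)) (S : Finset (Fin m)) : Setoid (Fin m) :=
  ⟨fun a b => P.r a b ∧ (a ∈ S ↔ b ∈ S),
    ⟨fun a => ⟨P.refl a, Iff.rfl⟩,
      fun h => ⟨P.symm h.1, h.2.symm⟩,
      fun h h' => ⟨P.trans h.1 h'.1, h.2.trans h'.2⟩⟩⟩

lemma refineBy_le (P : Setoid (Fin m)) (S : Finset (Fin m)) :
    ∀ a b, (refineBy P S).r a b → P.r a b := fun _ _ h => h.1

lemma card_refineBy_le (P : Setoid (Fin m)) (S : Finset (Fin m)) :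
    Nat.card (Quotient (refineBy P S)) ≤ 2 * Nat.card (Quotient P) := by
  classical
  let f : Quotient (refineBy P S) → Quotient P × Bool :=
    Quotient.lift (fun i => (Quotient.mk P i, decide (i ∈ S)))
      (by
        rintro a b ⟨h1, h2⟩
        simp only [Prod.mk.injEq]
        exact ⟨Quotient.sound h1, by simp [decide_eq_decide, h2]⟩)
  have hf : Function.Injective f := by
    rintro ⟨a⟩ ⟨b⟩ h
    have h' : ((Quotient.mk P a, decide (a ∈ S)) : Quotient P × Bool)
        = (Quotient.mk P b, decide (b ∈ S)) := h
    rw [Prod.mk.injEq] at h'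
    refine Quotient.sound ⟨Quotient.exact h'.1, ?_⟩
    simpa [decide_eq_decide] using h'.2
  calc Nat.card (Quotient (refineBy P S)) ≤ Nat.card (Quotient P × Bool) :=
        Nat.card_le_card_of_injective f hf
    _ = 2 * Nat.card (Quotient P) := by
        rw [Nat.card_prod]
        simp [Nat.card_eq_fintype_card, mul_comm]

lemma sum_block_eq (A : Matrix (Fin m) (Fin n) ℝ) (P : Setoid (Fin m)) (Q : Setoid (Fin n))
    (S : Finset (Fin m)) (T : Finset (Fin n)) :
    ∑ i ∈ S, ∑ j ∈ T, blockAvg A (refineBy P S) (refineBy Q T) i j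
      = ∑ i ∈ S, ∑ j ∈ T, A i j := by
  classical
  have hw : ∀ i i' j j', (refineBy P S).r i i' → (refineBy Q T).r j j' →
      ((if i ∈ S then (1:ℝ) else 0) * (if j ∈ T then (1:ℝ) else 0))
        = ((if i' ∈ S then (1:ℝ) else 0) * (if j' ∈ T then (1:ℝ) else 0)) := by
    intro i i' j j' h1 h2
    rcases h1 with ⟨-, h1⟩
    rcases h2 with ⟨-, h2⟩
    simp only [h1, h2]
  have key := sum_mul_blockAvg A (refineBy P S) (refineBy Q T)
    (fun i j => (if i ∈ S then (1:ℝ) else 0) * (if j ∈ T then (1:ℝ) else 0)) hw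
  have conv : ∀ (X : Matrix (Fin m) (Fin n) ℝ),
      ∑ i, ∑ j, ((if i ∈ S then (1:ℝ) else 0) * (if j ∈ T then (1:ℝ) else 0)) * X i j
        = ∑ i ∈ S, ∑ j ∈ T, X i j := by
    intro X
    rw [← Finset.sum_filter_add_sum_filter_not Finset.univ (fun i => i ∈ S)]
    have hz : ∑ i ∈ Finset.univ.filter (fun i => ¬ i ∈ S),
        ∑ j, ((if i ∈ S then (1:ℝ) else 0) * (if j ∈ T then (1:ℝ) else 0)) * X i j = 0 := by
      apply Finset.sum_eq_zero
      intro i hi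
      have : i ∉ S := (Finset.mem_filter.1 hi).2
      simp [this]
    rw [hz, add_zero]
    have hfS : Finset.univ.filter (fun i => i ∈ S) = S := by
      ext a; simp
    rw [hfS]
    refine Finset.sum_congr rfl fun i hi => ?_
    rw [← Finset.sum_filter_add_sum_filter_not Finset.univ (fun j => j ∈ T)]
    have hz2 : ∑ j ∈ Finset.univ.filter (fun j => ¬ j ∈ T),
        ((if i ∈ S then (1:ℝ) else 0) * (if j ∈ T then (1:ℝ) else 0)) * X i j = 0 := by
      apply Finset.sum_eq_zero
      intro j hj
      have : j ∉ T := (Finset.mem_filter.1 hj).2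
      simp [this]
    rw [hz2, add_zero]
    have hfT : Finset.univ.filter (fun j => j ∈ T) = T := by
      ext a; simp
    rw [hfT]
    refine Finset.sum_congr rfl fun j hj => ?_
    simp [hi, hj]
  rw [conv, conv] at key
  exact key

end Stmt10Aux
namespace Stmt10Aux

variable {m n : ℕ}

lemma cutNorm_le {M : Matrix (Fin m) (Fin n) ℝ} {c : ℝ} (hc : 0 ≤ c)
    (h : ∀ (x : Fin m → ℝ) (y : Fin n → ℝ), (∀ i, |x i| ≤ 1) → (∀ j, |y j| ≤ 1) →
      |∑ i, ∑ j, x i * M i j * y j| / ((m : ℝ) * n) ≤ c) : cutNorm M ≤ c := by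
  apply Real.sSup_le _ hc
  rintro r ⟨x, y, hx, hy, rfl⟩
  exact h x y hx hy

lemma num_bound {M : Matrix (Fin m) (Fin n) ℝ} {x : Fin m → ℝ} {y : Fin n → ℝ}
    (hx : ∀ i, |x i| ≤ 1) (hy : ∀ j, |y j| ≤ 1) :
    |∑ i, ∑ j, x i * M i j * y j| ≤ ∑ i, ∑ j, |M i j| := by
  calc |∑ i, ∑ j, x i * M i j * y j| ≤ ∑ i, |∑ j, x i * M i j * y j| :=
        Finset.abs_sum_le_sum_abs _ _
    _ ≤ ∑ i, ∑ j, |x i * M i j * y j| :=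
        Finset.sum_le_sum fun i _ => Finset.abs_sum_le_sum_abs _ _
    _ ≤ ∑ i, ∑ j, |M i j| := by
        refine Finset.sum_le_sum fun i _ => Finset.sum_le_sum fun j _ => ?_
        rw [abs_mul, abs_mul]
        have hM0 := abs_nonneg (M i j)
        have h1 := hx i
        have h2 := hy j
        have h4 := abs_nonneg (y j)
        have e1 : |x i| * |M i j| ≤ |M i j| := by nlinarith [abs_nonneg (x i)]
        calc |x i| * |M i j| * |y j| ≤ |M i j| * |y j| := mul_le_mul_of_nonneg_right e1 h4
          _ ≤ |M i j| * 1 := mul_le_mul_of_nonneg_left h2 hM0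
          _ = |M i j| := mul_one _

lemma cutNorm_le_two {M : Matrix (Fin m) (Fin n) ℝ} (hM : ∀ i j, |M i j| ≤ 2) :
    cutNorm M ≤ 2 := by
  apply cutNorm_le (by norm_num)
  intro x y hx hy
  rcases eq_or_lt_of_le (by positivity : (0:ℝ) ≤ (m : ℝ) * n) with h0 | h0
  · rw [← h0, div_zero]; norm_num
  · rw [div_le_iff₀ h0]
    calc |∑ i, ∑ j, x i * M i j * y j| ≤ ∑ i, ∑ j, |M i j| := num_bound hx hy
      _ ≤ ∑ _i : Fin m, ∑ _j : Fin n, (2:ℝ) :=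
          Finset.sum_le_sum fun i _ => Finset.sum_le_sum fun j _ => hM i j
      _ = 2 * ((m:ℝ) * n) := by simp [Finset.sum_const]; ring

lemma exists_gt_of_lt_cutNorm {M : Matrix (Fin m) (Fin n) ℝ} {ε : ℝ} (h : ε < cutNorm M) :
    ∃ (x : Fin m → ℝ) (y : Fin n → ℝ), (∀ i, |x i| ≤ 1) ∧ (∀ j, |y j| ≤ 1) ∧
      ε < |∑ i, ∑ j, x i * M i j * y j| / ((m : ℝ) * n) := by
  set s : Set ℝ := {r : ℝ | ∃ (x : Fin m → ℝ) (y : Fin n → ℝ),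
    (∀ i, |x i| ≤ 1) ∧ (∀ j, |y j| ≤ 1) ∧
    r = |∑ i, ∑ j, x i * M i j * y j| / (m * n)} with hs
  have hne : s.Nonempty := ⟨|∑ i, ∑ j, (0:ℝ) * M i j * 0| / (m*n), 0, 0,
    by intro i; simp, by intro j; simp, rfl⟩
  have hbdd : BddAbove s := by
    refine ⟨(∑ i, ∑ j, |M i j|) / ((m:ℝ) * n), ?_⟩
    rintro r ⟨x, y, hx, hy, rfl⟩
    rcases eq_or_lt_of_le (by positivity : (0:ℝ) ≤ (m : ℝ) * n) with h0 | h0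
    · rw [← h0, div_zero, div_zero]
    · exact (div_le_div_iff_of_pos_right h0).2 (num_bound hx hy)
  obtain ⟨r, hr, hεr⟩ := (lt_csSup_iff hbdd hne).1 h
  obtain ⟨x, y, hx, hy, rfl⟩ := hr
  exact ⟨x, y, hx, hy, hεr⟩

end Stmt10Aux
namespace Stmt10Aux

variable {m n : ℕ}

lemma exists_finset_abs_le {k : ℕ} (c x : Fin k → ℝ) (hx0 : ∀ i, 0 ≤ x i)
    (hx1 : ∀ i, x i ≤ 1) :
    ∃ S : Finset (Fin k), |∑ i, x i * c i| ≤ |∑ i ∈ S, c i| := by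
  classical
  rcases le_or_gt 0 (∑ i, x i * c i) with h | h
  · refine ⟨Finset.univ.filter (fun i => 0 ≤ c i), ?_⟩
    rw [abs_of_nonneg h]
    refine le_trans ?_ (le_abs_self _)
    have split := Finset.sum_filter_add_sum_filter_not Finset.univ (fun i => 0 ≤ c i)
      (fun i => x i * c i)
    have h1 : ∑ i ∈ Finset.univ.filter (fun i => ¬ 0 ≤ c i), x i * c i ≤ 0 :=
      Finset.sum_nonpos fun i hi =>
        mul_nonpos_of_nonneg_of_nonpos (hx0 i)
          (le_of_lt (lt_of_not_ge (Finset.mem_filter.1 hi).2))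
    have h2 : ∑ i ∈ Finset.univ.filter (fun i => 0 ≤ c i), x i * c i
        ≤ ∑ i ∈ Finset.univ.filter (fun i => 0 ≤ c i), c i := by
      refine Finset.sum_le_sum fun i hi => ?_
      have hc := (Finset.mem_filter.1 hi).2
      nlinarith [hx1 i, hx0 i]
    linarith
  · refine ⟨Finset.univ.filter (fun i => c i < 0), ?_⟩
    rw [abs_of_neg h]
    refine le_trans (neg_le_neg ?_) (neg_le_abs _)
    have split := Finset.sum_filter_add_sum_filter_not Finset.univ (fun i => c i < 0)
      (fun i => x i * c i)
    have h1 : 0 ≤ ∑ i ∈ Finset.univ.filter (fun i => ¬ c i < 0), x i * c i :=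
      Finset.sum_nonneg fun i hi =>
        mul_nonneg (hx0 i) (le_of_not_gt (Finset.mem_filter.1 hi).2)
    have h2 : ∑ i ∈ Finset.univ.filter (fun i => c i < 0), c i
        ≤ ∑ i ∈ Finset.univ.filter (fun i => c i < 0), x i * c i := by
      refine Finset.sum_le_sum fun i hi => ?_
      have hc := (Finset.mem_filter.1 hi).2
      nlinarith [hx1 i, hx0 i]
    linarith

end Stmt10Aux
namespace Stmt10Aux

variable {m n : ℕ}

lemma exists_ST (hm : 0 < m) (hn : 0 < n) {M : Matrix (Fin m) (Fin n) ℝ} {ε : ℝ}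
    (h : ε < cutNorm M) :
    ∃ (S : Finset (Fin m)) (T : Finset (Fin n)),
      ε / 4 * ((m : ℝ) * n) < |∑ i ∈ S, ∑ j ∈ T, M i j| := by
  classical
  obtain ⟨x, y, hx, hy, hr⟩ := exists_gt_of_lt_cutNorm h
  have hmn : (0:ℝ) < (m : ℝ) * n := by
    have h1 : (0:ℝ) < (m:ℝ) := by exact_mod_cast hm
    have h2 : (0:ℝ) < (n:ℝ) := by exact_mod_cast hn
    positivity
  have hnum : ε * ((m:ℝ) * n) < |∑ i, ∑ j, x i * M i j * y j| := by
    rw [lt_div_iff₀ hmn] at hr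
    linarith
  set xp : Fin m → ℝ := fun i => max (x i) 0 with hxp_def
  set xm : Fin m → ℝ := fun i => max (-x i) 0 with hxm_def
  set yp : Fin n → ℝ := fun j => max (y j) 0 with hyp_def
  set ym : Fin n → ℝ := fun j => max (-y j) 0 with hym_def
  have hxp : ∀ i, 0 ≤ xp i ∧ xp i ≤ 1 := fun i =>
    ⟨le_max_right _ _, max_le (le_of_abs_le (hx i)) zero_le_one⟩
  have hxm : ∀ i, 0 ≤ xm i ∧ xm i ≤ 1 := fun i =>
    ⟨le_max_right _ _, max_le (by have := hx i; rw [abs_le] at this; linarith) zero_le_one⟩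
  have hyp : ∀ j, 0 ≤ yp j ∧ yp j ≤ 1 := fun j =>
    ⟨le_max_right _ _, max_le (le_of_abs_le (hy j)) zero_le_one⟩
  have hym : ∀ j, 0 ≤ ym j ∧ ym j ≤ 1 := fun j =>
    ⟨le_max_right _ _, max_le (by have := hy j; rw [abs_le] at this; linarith) zero_le_one⟩
  have hdecomp : ∑ i, ∑ j, x i * M i j * y j =
      (∑ i, ∑ j, xp i * M i j * yp j) - (∑ i, ∑ j, xp i * M i j * ym j)
      - (∑ i, ∑ j, xm i * M i j * yp j) + (∑ i, ∑ j, xm i * M i j * ym j) := by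
    rw [← Finset.sum_sub_distrib, ← Finset.sum_sub_distrib, ← Finset.sum_add_distrib]
    refine Finset.sum_congr rfl fun i _ => ?_
    rw [← Finset.sum_sub_distrib, ← Finset.sum_sub_distrib, ← Finset.sum_add_distrib]
    refine Finset.sum_congr rfl fun j _ => ?_
    have h1 : x i = xp i - xm i := (max_zero_sub_max_neg_zero_eq_self (x i)).symm
    have h2 : y j = yp j - ym j := (max_zero_sub_max_neg_zero_eq_self (y j)).symm
    rw [h1, h2]; ring
  have key : ∃ (u : Fin m → ℝ) (v : Fin n → ℝ),
      (∀ i, 0 ≤ u i ∧ u i ≤ 1) ∧ (∀ j, 0 ≤ v j ∧ v j ≤ 1) ∧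
      ε / 4 * ((m:ℝ) * n) < |∑ i, ∑ j, u i * M i j * v j| := by
    by_contra hcon
    push_neg at hcon
    have b1 := hcon xp yp hxp hyp
    have b2 := hcon xp ym hxp hym
    have b3 := hcon xm yp hxm hyp
    have b4 := hcon xm ym hxm hym
    rw [hdecomp] at hnum
    set T1 := ∑ i, ∑ j, xp i * M i j * yp j
    set T2 := ∑ i, ∑ j, xp i * M i j * ym j
    set T3 := ∑ i, ∑ j, xm i * M i j * yp j
    set T4 := ∑ i, ∑ j, xm i * M i j * ym j
    have habs : |T1 - T2 - T3 + T4| ≤ |T1| + |T2| + |T3| + |T4| := by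
      calc |T1 - T2 - T3 + T4| ≤ |T1 - T2 - T3| + |T4| := abs_add_le _ _
        _ ≤ (|T1 - T2| + |T3|) + |T4| := by
            have : |T1 - T2 - T3| ≤ |T1 - T2| + |T3| := abs_sub _ _
            linarith
        _ ≤ (|T1| + |T2| + |T3|) + |T4| := by
            have : |T1 - T2| ≤ |T1| + |T2| := abs_sub _ _
            linarith
        _ = |T1| + |T2| + |T3| + |T4| := by ring
    linarith
  obtain ⟨u, v, hu, hv, huv⟩ := key
  have hrow : ∑ i, ∑ j, u i * M i j * v j = ∑ i, u i * (∑ j, M i j * v j) := by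
    refine Finset.sum_congr rfl fun i _ => ?_
    rw [Finset.mul_sum]
    exact Finset.sum_congr rfl fun j _ => by ring
  obtain ⟨S, hS⟩ := exists_finset_abs_le (fun i => ∑ j, M i j * v j) u
    (fun i => (hu i).1) (fun i => (hu i).2)
  have hswap : ∑ i ∈ S, ∑ j, M i j * v j = ∑ j, v j * ∑ i ∈ S, M i j := by
    rw [Finset.sum_comm]
    refine Finset.sum_congr rfl fun j _ => ?_
    rw [Finset.mul_sum]
    exact Finset.sum_congr rfl fun i _ => by ring
  obtain ⟨T, hT⟩ := exists_finset_abs_le (fun j => ∑ i ∈ S, M i j) v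
    (fun j => (hv j).1) (fun j => (hv j).2)
  refine ⟨S, T, ?_⟩
  have hcomm : ∑ j ∈ T, ∑ i ∈ S, M i j = ∑ i ∈ S, ∑ j ∈ T, M i j := Finset.sum_comm
  calc ε / 4 * ((m:ℝ) * n) < |∑ i, ∑ j, u i * M i j * v j| := huv
    _ = |∑ i, u i * (∑ j, M i j * v j)| := by rw [hrow]
    _ ≤ |∑ i ∈ S, ∑ j, M i j * v j| := hS
    _ = |∑ j, v j * ∑ i ∈ S, M i j| := by rw [hswap]
    _ ≤ |∑ j ∈ T, ∑ i ∈ S, M i j| := hT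
    _ = |∑ i ∈ S, ∑ j ∈ T, M i j| := by rw [hcomm]

end Stmt10Aux
namespace Stmt10Aux

variable {m n : ℕ}

lemma main_step {A : Matrix (Fin m) (Fin n) ℝ} (hm : 0 < m) (hn : 0 < n)
    {ε : ℝ} (hε : 0 < ε) :
    ∀ (k : ℕ) (P0 : Setoid (Fin m)) (Q0 : Setoid (Fin n)),
    ∃ (P : Setoid (Fin m)) (Q : Setoid (Fin n)) (s : ℕ),
      (∀ a b, P.r a b → P0.r a b) ∧ (∀ a b, Q.r a b → Q0.r a b) ∧ s ≤ k ∧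
      Nat.card (Quotient P) ≤ 2 ^ s * Nat.card (Quotient P0) ∧
      Nat.card (Quotient Q) ≤ 2 ^ s * Nat.card (Quotient Q0) ∧
      En A P0 Q0 + (s : ℝ) * (ε ^ 2 / 16) * ((m : ℝ) * n) ≤ En A P Q ∧
      (cutNorm (A - blockAvg A P Q) ≤ ε ∨ s = k) := by
  intro k
  induction k with
  | zero =>
    intro P0 Q0
    exact ⟨P0, Q0, 0, fun a b h => h, fun a b h => h, le_refl _, by simp, by simp,
      by simp, Or.inr rfl⟩
  | succ k ih =>
    intro P0 Q0
    rcases le_or_gt (cutNorm (A - blockAvg A P0 Q0)) ε with hle | hgt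
    · exact ⟨P0, Q0, 0, fun a b h => h, fun a b h => h, Nat.zero_le _, by simp, by simp,
        by simp, Or.inl hle⟩
    · obtain ⟨S, T, hST⟩ := exists_ST hm hn hgt
      set P1 := refineBy P0 S with hP1def
      set Q1 := refineBy Q0 T with hQ1def
      have hP1 : ∀ a b, P1.r a b → P0.r a b := refineBy_le P0 S
      have hQ1 : ∀ a b, Q1.r a b → Q0.r a b := refineBy_le Q0 T
      have hmn : (0:ℝ) < (m : ℝ) * n := by
        have h1 : (0:ℝ) < (m:ℝ) := by exact_mod_cast hm
        have h2 : (0:ℝ) < (n:ℝ) := by exact_mod_cast hn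
        positivity
      have hEn : En A P0 Q0 + ε ^ 2 / 16 * ((m:ℝ) * n) ≤ En A P1 Q1 := by
        have href := En_refine A P0 P1 Q0 Q1 hP1 hQ1
        set B := blockAvg A P0 Q0 with hB
        set C := blockAvg A P1 Q1 with hC
        set D := ∑ i, ∑ j, (C i j - B i j) ^ 2 with hD
        have hsum : ∑ i ∈ S, ∑ j ∈ T, (C i j - B i j)
            = ∑ i ∈ S, ∑ j ∈ T, (A i j - B i j) := by
          have e1 : ∑ i ∈ S, ∑ j ∈ T, (C i j - B i j)
              = (∑ i ∈ S, ∑ j ∈ T, C i j) - ∑ i ∈ S, ∑ j ∈ T, B i j := by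
            rw [← Finset.sum_sub_distrib]
            exact Finset.sum_congr rfl fun i _ => Finset.sum_sub_distrib _ _
          have e2 : ∑ i ∈ S, ∑ j ∈ T, (A i j - B i j)
              = (∑ i ∈ S, ∑ j ∈ T, A i j) - ∑ i ∈ S, ∑ j ∈ T, B i j := by
            rw [← Finset.sum_sub_distrib]
            exact Finset.sum_congr rfl fun i _ => Finset.sum_sub_distrib _ _
          have e3 : ∑ i ∈ S, ∑ j ∈ T, C i j = ∑ i ∈ S, ∑ j ∈ T, A i j := by
            rw [hC, hP1def, hQ1def]
            exact sum_block_eq A P0 Q0 S T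
          rw [e1, e2, e3]
        have hlow : ε / 4 * ((m:ℝ) * n) < |∑ i ∈ S, ∑ j ∈ T, (C i j - B i j)| := by
          rw [hsum]
          have : ∑ i ∈ S, ∑ j ∈ T, (A i j - B i j)
              = ∑ i ∈ S, ∑ j ∈ T, (A - B) i j := by
            refine Finset.sum_congr rfl fun i _ => Finset.sum_congr rfl fun j _ => ?_
            simp [Matrix.sub_apply]
          rw [this]
          exact hST
        set X := ∑ i ∈ S, ∑ j ∈ T, (C i j - B i j) with hX
        have hCS : X ^ 2 ≤ ((m:ℝ) * n) * D := by
          have h1 : (∑ p ∈ S ×ˢ T, (C p.1 p.2 - B p.1 p.2)) ^ 2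
              ≤ ((S ×ˢ T).card : ℝ) * ∑ p ∈ S ×ˢ T, (C p.1 p.2 - B p.1 p.2) ^ 2 :=
            sq_sum_le_card_mul_sum_sq (s := S ×ˢ T)
              (f := fun p => C p.1 p.2 - B p.1 p.2)
          have e1 : ∑ p ∈ S ×ˢ T, (C p.1 p.2 - B p.1 p.2) = X := by
            rw [Finset.sum_product]
          have e2 : ∑ p ∈ S ×ˢ T, (C p.1 p.2 - B p.1 p.2) ^ 2
              = ∑ i ∈ S, ∑ j ∈ T, (C i j - B i j) ^ 2 := by
            rw [Finset.sum_product]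
          have e3 : ∑ i ∈ S, ∑ j ∈ T, (C i j - B i j) ^ 2 ≤ D := by
            rw [hD]
            refine le_trans (Finset.sum_le_sum_of_subset_of_nonneg (Finset.subset_univ S)
              fun i _ _ => Finset.sum_nonneg fun j _ => by positivity) ?_
            refine Finset.sum_le_sum fun i _ => ?_
            exact Finset.sum_le_sum_of_subset_of_nonneg (Finset.subset_univ T)
              fun j _ _ => by positivity
          have e4 : ((S ×ˢ T).card : ℝ) ≤ (m:ℝ) * n := by
            rw [Finset.card_product]
            push_cast
            have c1 : (S.card : ℝ) ≤ m := by exact_mod_cast Finset.card_le_card (Finset.subset_univ S) |>.trans (by simp)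
            have c2 : (T.card : ℝ) ≤ n := by exact_mod_cast Finset.card_le_card (Finset.subset_univ T) |>.trans (by simp)
            have c3 : (0:ℝ) ≤ S.card := by positivity
            have c4 : (0:ℝ) ≤ T.card := by positivity
            nlinarith
          have hDnn : 0 ≤ ∑ p ∈ S ×ˢ T, (C p.1 p.2 - B p.1 p.2) ^ 2 :=
            Finset.sum_nonneg fun p _ => by positivity
          calc X ^ 2 ≤ ((S ×ˢ T).card : ℝ) * ∑ p ∈ S ×ˢ T, (C p.1 p.2 - B p.1 p.2) ^ 2 := by
                rw [← e1]; exact h1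
            _ ≤ ((m:ℝ)*n) * ∑ p ∈ S ×ˢ T, (C p.1 p.2 - B p.1 p.2) ^ 2 :=
                mul_le_mul_of_nonneg_right e4 hDnn
            _ ≤ ((m:ℝ)*n) * D := by
                rw [e2]
                exact mul_le_mul_of_nonneg_left e3 (le_of_lt hmn)
        have hX2 : (ε/4 * ((m:ℝ)*n)) ^ 2 < X ^ 2 := by
          have hnn : 0 ≤ ε/4 * ((m:ℝ)*n) := by positivity
          calc (ε/4 * ((m:ℝ)*n)) ^ 2 < |X| ^ 2 := by
                exact pow_lt_pow_left₀ hlow hnn (by norm_num)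
            _ = X ^ 2 := sq_abs X
        have hDlow : ε ^ 2 / 16 * ((m:ℝ)*n) ≤ D := by
          have h' : ((m:ℝ)*n) * (ε^2/16 * ((m:ℝ)*n)) < ((m:ℝ)*n) * D := by
            nlinarith
          exact le_of_lt (lt_of_mul_lt_mul_left h' (le_of_lt hmn))
        linarith
      obtain ⟨P, Q, s, h1, h2, h3, h4, h5, h6, h7⟩ := ih P1 Q1
      refine ⟨P, Q, s + 1, fun a b h => hP1 a b (h1 a b h), fun a b h => hQ1 a b (h2 a b h),
        Nat.succ_le_succ h3, ?_, ?_, ?_, ?_⟩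
      · calc Nat.card (Quotient P) ≤ 2 ^ s * Nat.card (Quotient P1) := h4
          _ ≤ 2 ^ s * (2 * Nat.card (Quotient P0)) :=
            Nat.mul_le_mul_left _ (card_refineBy_le P0 S)
          _ = 2 ^ (s+1) * Nat.card (Quotient P0) := by ring
      · calc Nat.card (Quotient Q) ≤ 2 ^ s * Nat.card (Quotient Q1) := h5
          _ ≤ 2 ^ s * (2 * Nat.card (Quotient Q0)) :=
            Nat.mul_le_mul_left _ (card_refineBy_le Q0 T)
          _ = 2 ^ (s+1) * Nat.card (Quotient Q0) := by ring
      · have : En A P1 Q1 + (s : ℝ) * (ε ^ 2 / 16) * ((m : ℝ) * n) ≤ En A P Q := h6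
        push_cast
        nlinarith
      · rcases h7 with h | h
        · exact Or.inl h
        · exact Or.inr (by rw [h])

end Stmt10Aux
namespace Stmt10Aux

variable {m n : ℕ}

def bnd (j : ℕ) : ℕ := (2 ^ (j + 2) * j) ^ (j ^ 2)

lemma one_le_bnd {j : ℕ} (hj : 1 ≤ j) : 1 ≤ bnd j := by
  unfold bnd
  exact Nat.one_le_pow _ _ (by positivity)

lemma pow_le_bnd {i : ℕ} (hi : 2 ≤ i) : 2 ^ (4 * i ^ 2) ≤ bnd i := by
  unfold bnd
  rw [pow_mul]
  apply Nat.pow_le_pow_left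
  calc 2 ^ 4 = 2 ^ 4 * 1 := (mul_one _).symm
    _ ≤ 2 ^ (i + 2) * i := Nat.mul_le_mul (Nat.pow_le_pow_right (by norm_num) (by omega))
        (by omega)

lemma card_top_le_one : Nat.card (Quotient (⊤ : Setoid (Fin m))) ≤ 1 := by
  have : Subsingleton (Quotient (⊤ : Setoid (Fin m))) :=
    ⟨fun a b => Quotient.inductionOn₂ a b fun x y => Quotient.sound trivial⟩
  exact Finite.card_le_one_iff_subsingleton.2 this

def Inv (A : Matrix (Fin m) (Fin n) ℝ) :
    ℕ → Setoid (Fin m) × Setoid (Fin n) × ℕ → Prop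
  | 0 => fun x => x = (⊤, ⊤, 0)
  | (j+1) => fun x =>
      Nat.card (Quotient x.1) ≤ 2 ^ x.2.2 ∧
      Nat.card (Quotient x.2.1) ≤ 2 ^ x.2.2 ∧
      (x.2.2 : ℝ) * ((2 / ((j:ℝ) + 1)) ^ 2 / 16) * ((m : ℝ) * n) ≤ En A x.1 x.2.1 ∧
      cutNorm (A - blockAvg A x.1 x.2.1) ≤ 2 / ((j:ℝ) + 1) ∧
      Nat.card (Quotient x.1) ≤ bnd (j + 1) ∧
      Nat.card (Quotient x.2.1) ≤ bnd (j + 1)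

noncomputable def chain {X : Type*} (I : ℕ → X → Prop) (R : X → X → Prop) (x0 : X)
    (h0 : I 0 x0) (step : ∀ j x, I j x → ∃ y, I (j+1) y ∧ R y x) :
    (j : ℕ) → {x : X // I j x} :=
  Nat.rec ⟨x0, h0⟩ (fun j p => ⟨(step j p.1 p.2).choose, (step j p.1 p.2).choose_spec.1⟩)

lemma chain_rel {X : Type*} (I : ℕ → X → Prop) (R : X → X → Prop) (x0 : X)
    (h0 : I 0 x0) (step : ∀ j x, I j x → ∃ y, I (j+1) y ∧ R y x) (j : ℕ) :
    R (chain I R x0 h0 step (j+1)).1 (chain I R x0 h0 step j).1 :=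
  (step j (chain I R x0 h0 step j).1 (chain I R x0 h0 step j).2).choose_spec.2

end Stmt10Aux
namespace Stmt10Aux

variable {m n : ℕ}

lemma step_lemma {A : Matrix (Fin m) (Fin n) ℝ} (hA : ∀ i j, |A i j| ≤ 1)
    (hm : 0 < m) (hn : 0 < n) :
    ∀ j x, Inv A j x → ∃ y, Inv A (j+1) y ∧
      ((∀ a b, y.1.r a b → x.1.r a b) ∧ (∀ a b, y.2.1.r a b → x.2.1.r a b)) := by
  have hmn : (0:ℝ) < (m:ℝ) * n := by
    have h1 : (0:ℝ) < (m:ℝ) := by exact_mod_cast hm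
    have h2 : (0:ℝ) < (n:ℝ) := by exact_mod_cast hn
    positivity
  intro j x hx
  match j with
  | 0 =>
    subst hx
    refine ⟨(⊤, ⊤, 0), ⟨?_, ?_, ?_, ?_, ?_, ?_⟩, fun a b _ => trivial, fun a b _ => trivial⟩
    · simpa using (card_top_le_one (m := m))
    · simpa using (card_top_le_one (m := n))
    · simp only [Nat.cast_zero, zero_mul]
      exact En_nonneg A ⊤ ⊤
    · norm_num
      apply cutNorm_le_two
      intro i j
      have h1 := hA i j
      have h2 := abs_blockAvg_le hA (⊤ : Setoid (Fin m)) (⊤ : Setoid (Fin n)) i j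
      calc |(A - blockAvg A ⊤ ⊤) i j| = |A i j - blockAvg A ⊤ ⊤ i j| := by
            simp [Matrix.sub_apply]
        _ ≤ |A i j| + |blockAvg A ⊤ ⊤ i j| := abs_sub _ _
        _ ≤ 2 := by linarith
    · exact le_trans card_top_le_one (one_le_bnd le_rfl)
    · exact le_trans card_top_le_one (one_le_bnd le_rfl)
  | (j+1) =>
    obtain ⟨P0, Q0, t⟩ := x
    obtain ⟨hc1', hc2', hEn', hcut', hb1, hb2⟩ := hx
    have hc1 : Nat.card (Quotient P0) ≤ 2 ^ t := hc1'
    have hc2 : Nat.card (Quotient Q0) ≤ 2 ^ t := hc2'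
    have hEn : (t : ℝ) * ((2 / ((j:ℝ) + 1)) ^ 2 / 16) * ((m:ℝ) * n) ≤ En A P0 Q0 := hEn'
    have hcut : cutNorm (A - blockAvg A P0 Q0) ≤ 2 / ((j:ℝ) + 1) := hcut'
    set c : ℝ := (j:ℝ) + 2 with hc_def
    have hc0 : (0:ℝ) < c := by positivity
    have hε : (0:ℝ) < 2 / c := by positivity
    obtain ⟨P, Q, s, h1, h2, h3, h4, h5, h6, h7⟩ :=
      main_step (A := A) hm hn hε (4 * (j+2)^2 + 1) P0 Q0
    have hEnle := En_le hA P Q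
    have hEn0 := En_nonneg A P0 Q0
    have hεsq : (2 / c) ^ 2 / 16 = 1 / (4 * c ^ 2) := by
      field_simp
      ring
    have hcutP : cutNorm (A - blockAvg A P Q) ≤ 2 / c := by
      rcases h7 with h | hsk
      · exact h
      · exfalso
        rw [hsk] at h6
        have hk : (1:ℝ) < ((4 * (j+2)^2 + 1 : ℕ) : ℝ) * ((2 / c) ^ 2 / 16) := by
          rw [hεsq]
          have e1 : ((4 * (j+2)^2 + 1 : ℕ) : ℝ) = 4 * c ^ 2 + 1 := by
            push_cast [hc_def]
            ring
          rw [e1, mul_one_div, lt_div_iff₀ (by positivity)]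
          linarith
        have hlt := mul_lt_mul_of_pos_right hk hmn
        rw [one_mul] at hlt
        nlinarith
    -- the new-level invariant for the energy
    have hεmono : (2 / c) ^ 2 ≤ (2 / ((j:ℝ) + 1)) ^ 2 := by
      have h01 : (0:ℝ) < (j:ℝ) + 1 := by positivity
      have hd : 2 / c ≤ 2 / ((j:ℝ) + 1) := by
        rw [hc_def, div_le_div_iff₀ (by positivity) h01]
        nlinarith
      exact pow_le_pow_left₀ hε.le hd 2
    have hEnNew : ((t + s : ℕ) : ℝ) * ((2 / c) ^ 2 / 16) * ((m:ℝ) * n) ≤ En A P Q := by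
      have ht : (t:ℝ) * ((2 / c) ^ 2 / 16) * ((m:ℝ) * n)
          ≤ (t:ℝ) * ((2 / ((j:ℝ)+1)) ^ 2 / 16) * ((m:ℝ) * n) := by
        have h16 : (2 / c) ^ 2 / 16 ≤ (2 / ((j:ℝ)+1)) ^ 2 / 16 := by linarith
        exact mul_le_mul_of_nonneg_right
          (mul_le_mul_of_nonneg_left h16 (Nat.cast_nonneg t)) hmn.le
      have e : ((t + s : ℕ) : ℝ) = (t:ℝ) + (s:ℝ) := by push_cast; ring
      rw [e]
      have expand : ((t:ℝ) + (s:ℝ)) * ((2 / c) ^ 2 / 16) * ((m:ℝ) * n)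
          = (t:ℝ) * ((2 / c) ^ 2 / 16) * ((m:ℝ) * n)
            + (s:ℝ) * ((2 / c) ^ 2 / 16) * ((m:ℝ) * n) := by ring
      rw [expand]
      linarith
    -- number-of-steps bound
    have hts : t + s ≤ 4 * (j+2)^2 := by
      have h' : ((t + s : ℕ) : ℝ) * ((2 / c) ^ 2 / 16) ≤ 1 := by
        have hh : (((t + s : ℕ) : ℝ) * ((2 / c) ^ 2 / 16)) * ((m:ℝ)*n) ≤ 1 * ((m:ℝ)*n) := by
          rw [one_mul]
          exact le_trans hEnNew hEnle
        exact le_of_mul_le_mul_right hh hmn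
      rw [hεsq, mul_one_div, div_le_one (by positivity)] at h'
      have e1 : (4 * c ^ 2 : ℝ) = ((4 * (j+2)^2 : ℕ) : ℝ) := by
        push_cast [hc_def]
        ring
      rw [e1] at h'
      exact_mod_cast h'
  -- assemble
    have hcard1 : Nat.card (Quotient P) ≤ 2 ^ (t + s) := by
      calc Nat.card (Quotient P) ≤ 2 ^ s * Nat.card (Quotient P0) := h4
        _ ≤ 2 ^ s * 2 ^ t := Nat.mul_le_mul_left _ hc1
        _ = 2 ^ (t + s) := by rw [← pow_add, Nat.add_comm]
    have hcard2 : Nat.card (Quotient Q) ≤ 2 ^ (t + s) := by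
      calc Nat.card (Quotient Q) ≤ 2 ^ s * Nat.card (Quotient Q0) := h5
        _ ≤ 2 ^ s * 2 ^ t := Nat.mul_le_mul_left _ hc2
        _ = 2 ^ (t + s) := by rw [← pow_add, Nat.add_comm]
    have hbndP : Nat.card (Quotient P) ≤ bnd (j + 2) := by
      calc Nat.card (Quotient P) ≤ 2 ^ (t + s) := hcard1
        _ ≤ 2 ^ (4 * (j+2)^2) := Nat.pow_le_pow_right (by norm_num) hts
        _ ≤ bnd (j + 2) := pow_le_bnd (by omega)
    have hbndQ : Nat.card (Quotient Q) ≤ bnd (j + 2) := by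
      calc Nat.card (Quotient Q) ≤ 2 ^ (t + s) := hcard2
        _ ≤ 2 ^ (4 * (j+2)^2) := Nat.pow_le_pow_right (by norm_num) hts
        _ ≤ bnd (j + 2) := pow_le_bnd (by omega)
    have ecast : ((j + 1 : ℕ) : ℝ) + 1 = c := by
      rw [hc_def]
      push_cast
      ring
    refine ⟨(P, Q, t + s), ⟨hcard1, hcard2, ?_, ?_, ?_, ?_⟩, h1, h2⟩
    · rw [ecast]
      exact hEnNew
    · rw [ecast]
      exact hcutP
    · exact hbndP
    · exact hbndQ

end Stmt10Aux


/-- Lemma 10.1: for any m×n matrix A with ‖A‖_∞ ≤ 1 there are sequences of partitions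
𝒫_j of the rows and 𝒬_j of the columns (encoded as setoids, where "𝒫_{j+1} refines 𝒫_j"
means every 𝒫_{j+1}-equivalence implies the corresponding 𝒫_j-equivalence, and the number
of parts is the number of equivalence classes) such that for every j ≥ 1: 𝒫_{j+1}, 𝒬_{j+1}
refine 𝒫_j, 𝒬_j; the numbers of parts are at most (2^{j+2} j)^{j²}; and
‖A − A^{𝒫_j,𝒬_j}‖_□ ≤ 2j⁻¹ + 6j³2⁻ʲ. -/
theorem stmt10 {m n : ℕ} (A : Matrix (Fin m) (Fin n) ℝ) (hA : linfNorm A ≤ 1) :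
    ∃ (P : ℕ → Setoid (Fin m)) (Q : ℕ → Setoid (Fin n)),
      ∀ j : ℕ, 1 ≤ j →
        ((∀ x y, (P (j + 1)).r x y → (P j).r x y) ∧
          (∀ x y, (Q (j + 1)).r x y → (Q j).r x y)) ∧
        (Nat.card (Quotient (P j)) ≤ (2 ^ (j + 2) * j) ^ (j ^ 2) ∧
          Nat.card (Quotient (Q j)) ≤ (2 ^ (j + 2) * j) ^ (j ^ 2)) ∧
        cutNorm (A - blockAvg A (P j) (Q j)) ≤ 2 / (j : ℝ) + 6 * (j : ℝ) ^ 3 / 2 ^ j := by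
  classical
  have hA' : ∀ i j, |A i j| ≤ 1 := by
    intro i j
    have h1 : |A i j| ≤ ⨆ j', |A i j'| :=
      le_ciSup (f := fun j' => |A i j'|) (Finite.bddAbove_range _) j
    have h2 : (⨆ j', |A i j'|) ≤ ⨆ i', ⨆ j', |A i' j'| :=
      le_ciSup (f := fun i' => ⨆ j', |A i' j'|) (Finite.bddAbove_range _) i
    exact h1.trans (h2.trans hA)
  have hRHS : ∀ j : ℕ, 1 ≤ j → (0:ℝ) ≤ 2 / (j:ℝ) + 6 * (j:ℝ)^3 / 2^j := by
    intro j hj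
    positivity
  by_cases h0 : m = 0 ∨ n = 0
  · refine ⟨fun _ => ⊤, fun _ => ⊤, ?_⟩
    intro j hj
    refine ⟨⟨fun x y _ => trivial, fun x y _ => trivial⟩, ⟨?_, ?_⟩, ?_⟩
    · exact le_trans Stmt10Aux.card_top_le_one (Stmt10Aux.one_le_bnd hj)
    · exact le_trans Stmt10Aux.card_top_le_one (Stmt10Aux.one_le_bnd hj)
    · apply Stmt10Aux.cutNorm_le (hRHS j hj)
      intro x y hx hy
      have hz : ((m:ℝ) * n) = 0 := by
        rcases h0 with h | h <;> simp [h]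
      rw [hz, div_zero]
      exact hRHS j hj
  · push_neg at h0
    have hm : 0 < m := Nat.pos_of_ne_zero h0.1
    have hn : 0 < n := Nat.pos_of_ne_zero h0.2
    let R : (Setoid (Fin m) × Setoid (Fin n) × ℕ) → (Setoid (Fin m) × Setoid (Fin n) × ℕ) → Prop :=
      fun y x => (∀ a b, y.1.r a b → x.1.r a b) ∧ (∀ a b, y.2.1.r a b → x.2.1.r a b)
    let g := Stmt10Aux.chain (Stmt10Aux.Inv A) R (⊤, ⊤, 0) rfl
      (Stmt10Aux.step_lemma hA' hm hn)
    refine ⟨fun j => (g j).1.1, fun j => (g j).1.2.1, ?_⟩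
    intro j hj
    obtain ⟨j', rfl⟩ : ∃ j', j = j' + 1 := ⟨j - 1, by omega⟩
    obtain ⟨hcard1, hcard2, hEn, hcut, hb1, hb2⟩ := (g (j' + 1)).2
    have hrel := Stmt10Aux.chain_rel (Stmt10Aux.Inv A) R (⊤, ⊤, 0) rfl
      (Stmt10Aux.step_lemma hA' hm hn) (j' + 1)
    refine ⟨⟨hrel.1, hrel.2⟩, ⟨hb1, hb2⟩, ?_⟩
    have ecast : (2:ℝ) / ((j':ℝ) + 1) = 2 / ((j' + 1 : ℕ) : ℝ) := by push_cast; ring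
    calc cutNorm (A - blockAvg A (g (j' + 1)).1.1 (g (j' + 1)).1.2.1)
        ≤ 2 / ((j':ℝ) + 1) := hcut
      _ = 2 / ((j' + 1 : ℕ) : ℝ) := ecast
      _ ≤ 2 / ((j' + 1 : ℕ) : ℝ) + 6 * ((j' + 1 : ℕ) : ℝ)^3 / 2^(j'+1) :=
          le_add_of_nonneg_right (by positivity)
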